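/- Let h ≥ 1 be an integer, and define c_0 = 1 and c_i = c_{i−1} + 1 + h·Fib_{c_{i−1}+1} − (h − i) for 1 ≤ i ≤ h. Then there exists an antichain sequence in ℤ_{≥0}^3 of length exactly c_h whose degree growth is bounded by the function i ↦ h·Fib_i. In particular, such an antichain sequence is given explicitly by (h,0,0), (h−1,1,0), (h−1,0,h+1), (h−2,2h+2,0), …, where for each 1 ≤ i ≤ h one inserts the elements (h−i, h·Fib_{c_{i−1}+1} − (h−i), 0), (h−i, h·Fib_{c_{i−1}+1} − (h−i) − 1, 1), …, (h−i, 0, h·Fib_{c_i} − (h−i)) occupying positions c_{i−1}+1 through c_i. -/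

import Mathlib

/-- The sequence `c_i`: `c_0 = 1`, `c_i = c_{i-1} + 1 + h·Fib_{c_{i-1}+1} − (h − i)`. -/
def cseq (h : ℕ) : ℕ → ℕ
  | 0 => 1
  | (i+1) => cseq h i + 1 + h * Nat.fib (cseq h i + 1) - (h - (i + 1))

lemma cseq_pos (h : ℕ) : ∀ i, 1 ≤ cseq h i := by
  intro i
  induction i with
  | zero => simp [cseq]
  | succ n ih =>
    have hf : 1 ≤ Nat.fib (cseq h n + 1) := Nat.fib_pos.mpr (by omega)
    have : h ≤ h * Nat.fib (cseq h n + 1) := Nat.le_mul_of_pos_right h (by omega)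
    show 1 ≤ cseq h n + 1 + h * Nat.fib (cseq h n + 1) - (h - (n + 1))
    omega

lemma cseq_lt_succ (h i : ℕ) : cseq h i < cseq h (i+1) := by
  have h1 := cseq_pos h i
  have hf : 1 ≤ Nat.fib (cseq h i + 1) := Nat.fib_pos.mpr (by omega)
  have : h ≤ h * Nat.fib (cseq h i + 1) := Nat.le_mul_of_pos_right h (by omega)
  show cseq h i < cseq h i + 1 + h * Nat.fib (cseq h i + 1) - (h - (i + 1))
  omega

lemma lt_cseq (h : ℕ) : ∀ p, p < cseq h p := by
  intro p
  induction p with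
  | zero => have := cseq_pos h 0; omega
  | succ n ih => have := cseq_lt_succ h n; omega

/-- The block of position `p`: least `i` with `p ≤ cseq h i`. -/
def blk (h p : ℕ) : ℕ := Nat.find (⟨p, (lt_cseq h p).le⟩ : ∃ i, p ≤ cseq h i)

lemma blk_spec (h p : ℕ) : p ≤ cseq h (blk h p) :=
  Nat.find_spec (⟨p, (lt_cseq h p).le⟩ : ∃ i, p ≤ cseq h i)

lemma blk_le (h p i : ℕ) (hp : p ≤ cseq h i) : blk h p ≤ i :=
  Nat.find_min' _ hp

lemma blk_min (h p j : ℕ) (hj : j < blk h p) : cseq h j < p := by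
  have := Nat.find_min (⟨p, (lt_cseq h p).le⟩ : ∃ i, p ≤ cseq h i) hj
  omega

def f1 (h p : ℕ) : ℕ := h - blk h p

def f2 (h p : ℕ) : ℕ :=
  if blk h p = 0 then 0
  else h * Nat.fib (cseq h (blk h p - 1) + 1) - (h - blk h p) - (p - cseq h (blk h p - 1) - 1)

def f3 (h p : ℕ) : ℕ := h * Nat.fib p - f1 h p - f2 h p

/-- Structural facts about a position in a block `b ≥ 1`. -/
lemma block_struct (h p : ℕ) (hb : 1 ≤ blk h p) :
    cseq h (blk h p - 1) < p ∧ p ≤ cseq h (blk h p) ∧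
    1 ≤ cseq h (blk h p - 1) ∧
    (h - blk h p) ≤ h * Nat.fib (cseq h (blk h p - 1) + 1) ∧
    cseq h (blk h p) = cseq h (blk h p - 1) + 1 +
        h * Nat.fib (cseq h (blk h p - 1) + 1) - (h - blk h p) := by
  set b := blk h p with hbdef
  have h1 : cseq h (b - 1) < p := blk_min h p (b-1) (by omega)
  have h2 : p ≤ cseq h b := blk_spec h p
  have h3 : 1 ≤ cseq h (b - 1) := cseq_pos h _
  have hf : 1 ≤ Nat.fib (cseq h (b-1) + 1) := Nat.fib_pos.mpr (by omega)
  have h4 : h ≤ h * Nat.fib (cseq h (b-1) + 1) := Nat.le_mul_of_pos_right h (by omega)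
  have h5 : cseq h b = cseq h (b-1) + 1 + h * Nat.fib (cseq h (b-1) + 1) - (h - b) := by
    conv_lhs => rw [show b = (b-1)+1 by omega]
    show cseq h (b-1) + 1 + h * Nat.fib (cseq h (b-1) + 1) - (h - ((b-1) + 1)) = _
    congr 2
    omega
  exact ⟨h1, h2, h3, by omega, h5⟩

lemma degsum (h p : ℕ) (hp : 1 ≤ p) : f1 h p + f2 h p + f3 h p = h * Nat.fib p := by
  have hfp : 1 ≤ Nat.fib p := Nat.fib_pos.mpr (by omega)
  have hhp : h ≤ h * Nat.fib p := Nat.le_mul_of_pos_right h (by omega)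
  suffices hs : f1 h p + f2 h p ≤ h * Nat.fib p by
    unfold f3; omega
  rcases Nat.eq_zero_or_pos (blk h p) with h0 | h0
  · simp [f1, f2, h0]; omega
  · obtain ⟨h1, h2, h3, h4, h5⟩ := block_struct h p h0
    have hmono : Nat.fib (cseq h (blk h p - 1) + 1) ≤ Nat.fib p := Nat.fib_mono (by omega)
    have hmul : h * Nat.fib (cseq h (blk h p - 1) + 1) ≤ h * Nat.fib p :=
      Nat.mul_le_mul_left h hmono
    unfold f1 f2
    rw [if_neg (by omega)]
    omega

lemma f2_lt (h p q : ℕ) (hp : 1 ≤ p) (hpq : p < q) (hb : blk h p = blk h q) :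
    f2 h q < f2 h p := by
  have hb1 : 1 ≤ blk h p := by
    by_contra hc
    have h0 : blk h p = 0 := by omega
    have hq0 : blk h q = 0 := by omega
    have := blk_spec h q
    rw [hq0] at this
    simp only [cseq] at this
    have := blk_spec h p
    rw [h0] at this
    simp only [cseq] at this
    omega
  obtain ⟨h1, h2, h3, h4, h5⟩ := block_struct h p hb1
  obtain ⟨g1, g2, g3, g4, g5⟩ := block_struct h q (by omega)
  rw [← hb] at g1 g2 g3 g4 g5
  unfold f2
  rw [← hb, if_neg (by omega), if_neg (by omega)]
  omega

def seqfun (h p : ℕ) : Fin 3 → ℕ := ![f1 h p, f2 h p, f3 h p]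

lemma incomp (h p q : ℕ) (hp : 1 ≤ p) (hpq : p < q) (hq : q ≤ cseq h h) :
    ¬ seqfun h p ≤ seqfun h q ∧ ¬ seqfun h q ≤ seqfun h p := by
  have Sp := degsum h p hp
  have Sq := degsum h q (by omega)
  have M : h * Nat.fib p ≤ h * Nat.fib q := Nat.mul_le_mul_left h (Nat.fib_mono hpq.le)
  have bmono : blk h p ≤ blk h q := blk_le h p _ (le_trans hpq.le (blk_spec h q))
  have bqh : blk h q ≤ h := blk_le h q h hq
  rcases eq_or_lt_of_le bmono with heq | hlt
  · have hf2 : f2 h q < f2 h p := f2_lt h p q hp hpq heq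
    have hf1 : f1 h p = f1 h q := by unfold f1; rw [heq]
    constructor
    · intro hle
      have h1 := hle 1
      simp only [seqfun, Matrix.cons_val_one, Matrix.head_cons, Matrix.cons_val_zero] at h1
      omega
    · intro hle
      have h2 := hle 2
      simp only [seqfun, Matrix.cons_val_two, Matrix.tail_cons, Matrix.head_cons] at h2
      omega
  · have hf1 : f1 h q < f1 h p := by unfold f1; omega
    constructor
    · intro hle
      have h0 := hle 0
      simp only [seqfun, Matrix.cons_val_zero] at h0
      omega
    · intro hle
      have h1 := hle 1
      have h2 := hle 2
      simp only [seqfun, Matrix.cons_val_one, Matrix.head_cons,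
        Matrix.cons_val_two, Matrix.tail_cons, Matrix.cons_val_zero] at h1 h2
      omega

/-- There exists an antichain sequence in `ℤ_{≥0}^3` (componentwise order) of length
exactly `c_h` whose degree growth is bounded by the function `i ↦ h·Fib_i`. -/
theorem exists_antichain_length_cseq (h : ℕ) (hh : 1 ≤ h) :
    ∃ s : Fin (cseq h h) → (Fin 3 → ℕ),
      (∀ i j : Fin (cseq h h), i ≠ j → ¬ s i ≤ s j) ∧
      (∀ i : Fin (cseq h h), (∑ k, s i k) ≤ h * Nat.fib (i.val + 1)) := by
  refine ⟨fun i => seqfun h (i.val + 1), ?_, ?_⟩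
  · intro i j hij
    rcases lt_trichotomy i.val j.val with hlt | heq | hgt
    · exact (incomp h (i.val + 1) (j.val + 1) (by omega) (by omega)
        (by have := j.isLt; omega)).1
    · exact absurd (Fin.ext heq) hij
    · exact (incomp h (j.val + 1) (i.val + 1) (by omega) (by omega)
        (by have := i.isLt; omega)).2
  · intro i
    have := degsum h (i.val + 1) (by omega)
    rw [show (∑ k, seqfun h (i.val + 1) k) =
        f1 h (i.val+1) + f2 h (i.val+1) + f3 h (i.val+1) by
      simp [seqfun, Fin.sum_univ_three]]
    omega
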